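/- arXiv:0807.4247 — 2 statements merged into one kernel-verified Lean document; each statement's English description precedes it below -/
import Mathlib

section
/- Let α, β, γ, δ, κ be integers satisfying α, β, γ, δ, κ ≥ 0, α+β > 0, 0 < δ+γ ≤ β+κ, and κ ≤ min(α, γ), and set s = β−(γ−κ)−δ. Then there exists a Z2Z4-additive code 𝒞 of type (α,β;γ,δ;κ) with ker(Φ(𝒞)) = k for every k in the following set: {γ+δ, γ+δ+1, …, γ+2δ−2} ∪ {γ+2δ} if s ≥ 2; {γ+2δ−k̄ : k̄ even, 0 ≤ k̄ ≤ 2⌈(δ−1)/2⌉} if s = 1; and {γ+2δ} if s = 0. -/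
/-- The ambient group `Z2^α × Z4^β`, with componentwise ring structure
(so `u * v` is the componentwise product). -/
abbrev Amb (α β : ℕ) := (Fin α → ZMod 2) × (Fin β → ZMod 4)

/-- The binary space `Z2^α × (Z2²)^β ≅ Z2^(α+2β)`. -/
abbrev Bin (α β : ℕ) := (Fin α → ZMod 2) × (Fin β → ZMod 2 × ZMod 2)

/-- The Gray map `φ : Z4 → Z2²` with `φ(0)=(0,0), φ(1)=(0,1), φ(2)=(1,1), φ(3)=(1,0)`. -/
def grayPair (y : ZMod 4) : ZMod 2 × ZMod 2 :=
  match y.val with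
  | 0 => (0, 0)
  | 1 => (0, 1)
  | 2 => (1, 1)
  | _ => (1, 0)

/-- The extended Gray map `Φ : Z2^α × Z4^β → Z2^(α+2β)`. -/
def Phi {α β : ℕ} (u : Amb α β) : Bin α β :=
  (u.1, fun i => grayPair (u.2 i))

/-- The kernel `K(C) = {x | x + C = C}` of a binary code. -/
def kernelK {α β : ℕ} (C : Set (Bin α β)) : Set (Bin α β) :=
  {x | (fun y => x + y) '' C = C}

/-- The rank of a binary code: the `Z2`-dimension of its linear span. -/
noncomputable def rankOf {α β : ℕ} (C : Set (Bin α β)) : ℕ :=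
  Module.finrank (ZMod 2) (Submodule.span (ZMod 2) C)

/-- The dimension of the kernel of a binary code. -/
noncomputable def kerDim {α β : ℕ} (C : Set (Bin α β)) : ℕ :=
  Module.finrank (ZMod 2) (Submodule.span (ZMod 2) (kernelK C))

/-- A `Z2Z4`-additive code `C ⊆ Z2^α × Z4^β` is of type `(α,β;γ,δ;κ)`:
`|C| = 2^(γ+2δ)`, the number of elements `x` with `2x = 0` is `2^(γ+δ)`, and `κ` is the
`Z2`-dimension of the projection onto the first `α` coordinates of `{x ∈ C | 2x = 0}`. -/
def IsTypeOf (α β γ δ κ : ℕ) (C : AddSubgroup (Amb α β)) : Prop :=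
  Nat.card C = 2 ^ (γ + 2 * δ) ∧
  Nat.card {x : Amb α β | x ∈ C ∧ 2 • x = 0} = 2 ^ (γ + δ) ∧
  Module.finrank (ZMod 2)
    (Submodule.span (ZMod 2) (Prod.fst '' {x : Amb α β | x ∈ C ∧ 2 • x = 0})) = κ

abbrev D (κ g δ : ℕ) := (Fin κ → ZMod 2) × (Fin g → ZMod 2) × (Fin δ → ZMod 4)

def Lsum {δ : ℕ} (S : ℕ → Prop) [DecidablePred S] (lam : Fin δ → ZMod 4) : ZMod 4 :=
  ∑ i : Fin δ, if S i.val then lam i else 0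

def t1 (t : ℕ) : ℕ := if Even t then t else t - 1

def S2 (t : ℕ) : ℕ → Prop := fun n => Odd t ∧ (n = 0 ∨ n = t - 1)

instance (t : ℕ) : DecidablePred (S2 t) := fun n => by unfold S2; infer_instance

def Fy {κ g δ : ℕ} (t : ℕ) (d : D κ g δ) (j : ℕ) : ZMod 4 :=
  if h : j < g then 2 * ((d.2.1 ⟨j, h⟩).val : ZMod 4)
  else if h2 : j - g < δ ∧ g ≤ j then d.2.2 ⟨j - g, h2.1⟩
  else if j = g + δ then Lsum (· < t1 t) d.2.2
  else if j = g + δ + 1 then Lsum (S2 t) d.2.2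
  else 0

def Fmap (α β : ℕ) {κ g δ : ℕ} (t : ℕ) (d : D κ g δ) : Amb α β :=
  (fun i => if h : i.val < κ then d.1 ⟨i.val, h⟩ else 0, fun j => Fy t d j.val)

-- evaluation lemmas
lemma Fy_lt {κ g δ t : ℕ} (d : D κ g δ) {j : ℕ} (h : j < g) :
    Fy t d j = 2 * ((d.2.1 ⟨j, h⟩).val : ZMod 4) := by
  unfold Fy; rw [dif_pos h]

lemma Fy_mid {κ g δ t : ℕ} (d : D κ g δ) {j : ℕ} (h1 : g ≤ j) (h2 : j < g + δ) :
    Fy t d j = d.2.2 ⟨j - g, by omega⟩ := by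
  unfold Fy; rw [dif_neg (by omega), dif_pos ⟨by omega, h1⟩]

lemma Fy_c1 {κ g δ t : ℕ} (d : D κ g δ) :
    Fy t d (g + δ) = Lsum (· < t1 t) d.2.2 := by
  unfold Fy; rw [dif_neg (by omega), dif_neg (by omega), if_pos rfl]

lemma Fy_c2 {κ g δ t : ℕ} (d : D κ g δ) :
    Fy t d (g + δ + 1) = Lsum (S2 t) d.2.2 := by
  unfold Fy; rw [dif_neg (by omega), dif_neg (by omega), if_neg (by omega), if_pos rfl]

lemma Fy_hi {κ g δ t : ℕ} (d : D κ g δ) {j : ℕ} (h : g + δ + 1 < j) :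
    Fy t d j = 0 := by
  unfold Fy; rw [dif_neg (by omega), dif_neg (by omega), if_neg (by omega), if_neg (by omega)]

lemma Lsum_add {δ : ℕ} (S : ℕ → Prop) [DecidablePred S] (a b : Fin δ → ZMod 4) :
    Lsum S (a + b) = Lsum S a + Lsum S b := by
  unfold Lsum
  rw [← Finset.sum_add_distrib]
  refine Finset.sum_congr rfl fun i _ => ?_
  by_cases h : S i.val <;> simp [h]

lemma cast2_add (a b : ZMod 2) :
    2 * (((a+b).val : ZMod 4)) = 2 * ((a.val : ZMod 4)) + 2 * ((b.val : ZMod 4)) := by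
  revert a b; decide

lemma Fy_add {κ g δ : ℕ} (t : ℕ) (d e : D κ g δ) (j : ℕ) :
    Fy t (d + e) j = Fy t d j + Fy t e j := by
  unfold Fy
  split_ifs with h h2 h3 h4
  · exact cast2_add _ _
  · rfl
  · exact Lsum_add _ _ _
  · exact Lsum_add _ _ _
  · simp

lemma Fmap_add (α β : ℕ) {κ g δ : ℕ} (t : ℕ) (d e : D κ g δ) :
    Fmap α β t (d + e) = Fmap α β t d + Fmap α β t e := by
  unfold Fmap
  refine Prod.ext ?_ ?_
  · funext i
    by_cases h : i.val < κ <;> simp [h]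
  · funext j
    exact Fy_add t d e j.val

lemma Fmap_inj (α β : ℕ) {κ g δ : ℕ} (t : ℕ) (hκα : κ ≤ α) (hgd : g + δ ≤ β) :
    Function.Injective (Fmap α β (κ := κ) (g := g) (δ := δ) t) := by
  intro d e h
  have hx := congrArg Prod.fst h
  have hy := congrArg Prod.snd h
  simp only [Fmap] at hx hy
  refine Prod.ext ?_ (Prod.ext ?_ ?_)
  · funext i
    have := congrFun hx ⟨i.val, lt_of_lt_of_le i.isLt hκα⟩
    simpa [i.isLt] using this
  · funext i
    have hi : (i.val : ℕ) < β := by omega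
    have := congrFun hy ⟨i.val, hi⟩
    rw [Fy_lt d i.isLt, Fy_lt e i.isLt] at this
    have h2 : ∀ a b : ZMod 2, 2 * ((a.val : ZMod 4)) = 2 * ((b.val : ZMod 4)) → a = b := by decide
    exact h2 _ _ this
  · funext i
    have hi : g + i.val < β := by omega
    have h0 := congrFun hy ⟨g + i.val, hi⟩
    have h0' : Fy t d (g + i.val) = Fy t e (g + i.val) := h0
    rw [Fy_mid d (by omega) (by omega), Fy_mid e (by omega) (by omega)] at h0'
    simpa [Nat.add_sub_cancel_left, Fin.eta] using h0'


def qadd {α β : ℕ} (u v : Amb α β) : Amb α β := u + v + u*v + u*v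

lemma qadd_fst {α β : ℕ} (u v : Amb α β) : (qadd u v).1 = u.1 + v.1 := by
  have h : ∀ x y : ZMod 2, x + y + x*y + x*y = x + y := by decide
  funext i
  show u.1 i + v.1 i + u.1 i * v.1 i + u.1 i * v.1 i = u.1 i + v.1 i
  exact h _ _

lemma qadd_snd {α β : ℕ} (u v : Amb α β) (j : Fin β) :
    (qadd u v).2 j = u.2 j + v.2 j + 2 * (u.2 j * v.2 j) := by
  show u.2 j + v.2 j + u.2 j * v.2 j + u.2 j * v.2 j = _
  ring

lemma Phi_qadd {α β : ℕ} (u v : Amb α β) : Phi u + Phi v = Phi (qadd u v) := by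
  have h : ∀ a b : ZMod 4, grayPair a + grayPair b = grayPair (a + b + 2*(a*b)) := by decide
  refine Prod.ext ?_ ?_
  · show u.1 + v.1 = (qadd u v).1
    rw [qadd_fst]
  · funext j
    show grayPair (u.2 j) + grayPair (v.2 j) = grayPair ((qadd u v).2 j)
    rw [qadd_snd]
    exact h _ _

lemma qadd_invol {α β : ℕ} (u w : Amb α β) : qadd u (qadd u w) = w := by
  have h4 : ∀ a b : ZMod 4, a + (a + b + a*b + a*b) + a*(a + b + a*b + a*b)
      + a*(a + b + a*b + a*b) = b := by decide
  have h2 : ∀ a b : ZMod 2, a + (a + b + a*b + a*b) + a*(a + b + a*b + a*b)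
      + a*(a + b + a*b + a*b) = b := by decide
  refine Prod.ext ?_ ?_
  · funext i; exact h2 (u.1 i) (w.1 i)
  · funext j; exact h4 (u.2 j) (w.2 j)

lemma Phi_zero {α β : ℕ} : Phi (0 : Amb α β) = 0 := by
  refine Prod.ext rfl ?_
  funext j
  show grayPair 0 = 0
  rfl

lemma Phi_inj {α β : ℕ} : Function.Injective (Phi (α := α) (β := β)) := by
  have hg : Function.Injective grayPair := by decide
  intro u v h
  have h1 := congrArg Prod.fst h
  have h2 := congrArg Prod.snd h
  refine Prod.ext h1 ?_
  funext j
  exact hg (congrFun h2 j)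


def Kset (κ g δ t : ℕ) : Set (D κ g δ) := {d | ∀ i : Fin δ, i.val < t → 2 * d.2.2 i = 0}

lemma t1_le (t : ℕ) : t1 t ≤ t := by unfold t1; split <;> omega

lemma t1_even (t : ℕ) (ht : t ≠ 1) : Even (t1 t) := by
  by_cases h : Even t
  · simp [t1, h]
  · simp only [t1, if_neg h]
    have h1 := Nat.odd_iff.mp (Nat.not_even_iff_odd.mp h)
    rcases Nat.even_or_odd (t-1) with h2 | h2
    · exact h2
    · have := Nat.odd_iff.mp h2; omega

lemma S2_lt {t : ℕ} {n : ℕ} (h : S2 t n) : n < t := by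
  obtain ⟨ho, h⟩ := h
  have := Nat.odd_iff.mp ho
  omega

lemma Lsum_congr {δ : ℕ} (S : ℕ → Prop) [DecidablePred S] {a b : Fin δ → ZMod 4}
    (h : ∀ i, a i = b i) : Lsum S a = Lsum S b := by
  unfold Lsum
  exact Finset.sum_congr rfl fun i _ => by rw [h i]

lemma two_Lsum {δ t : ℕ} (S : ℕ → Prop) [DecidablePred S] (hS : ∀ n, S n → n < t)
    (lam : Fin δ → ZMod 4) (hlam : ∀ i : Fin δ, i.val < t → 2 * lam i = 0) :
    2 * Lsum S lam = 0 := by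
  unfold Lsum
  rw [Finset.mul_sum]
  refine Finset.sum_eq_zero fun i _ => ?_
  by_cases h : S i.val
  · rw [if_pos h]; exact hlam i (hS _ h)
  · rw [if_neg h, mul_zero]

lemma Lsum_twomul {δ t : ℕ} (S : ℕ → Prop) [DecidablePred S] (hS : ∀ n, S n → n < t)
    (lam mu : Fin δ → ZMod 4) (hlam : ∀ i : Fin δ, i.val < t → 2 * lam i = 0) :
    Lsum S (fun i => 2 * (lam i * mu i)) = 0 := by
  unfold Lsum
  refine Finset.sum_eq_zero fun i _ => ?_
  by_cases h : S i.val
  · rw [if_pos h]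
    show 2 * (lam i * mu i) = 0
    rw [show 2 * (lam i * mu i) = (2 * lam i) * mu i by ring, hlam i (hS _ h), zero_mul]
  · rw [if_neg h]

lemma Lsum_ind {δ : ℕ} (S : ℕ → Prop) [DecidablePred S] (i0 : Fin δ) :
    Lsum S (fun i => if i = i0 then (1 : ZMod 4) else 0) = if S i0.val then 1 else 0 := by
  unfold Lsum
  rw [Finset.sum_eq_single i0]
  · by_cases h : S i0.val <;> simp [h]
  · intro i _ hne
    by_cases h : S i.val <;> simp [h, hne]
  · simp

lemma Lsum_mul_ind {δ : ℕ} (S : ℕ → Prop) [DecidablePred S] (f : Fin δ → ZMod 4) (i0 : Fin δ) :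
    Lsum S (fun i => 2 * (f i * (if i = i0 then 1 else 0))) =
      if S i0.val then 2 * f i0 else 0 := by
  unfold Lsum
  rw [Finset.sum_eq_single i0]
  · by_cases h : S i0.val <;> simp [h]
  · intro i _ hne
    by_cases h : S i.val <;> simp [h, hne]
  · simp

lemma qadd_closure (α β : ℕ) {κ g δ : ℕ} (t : ℕ) (d e : D κ g δ) (hd : d ∈ Kset κ g δ t) :
    qadd (Fmap α β t d) (Fmap α β t e) =
      Fmap α β t (d + e + (0, 0, fun i => 2 * (d.2.2 i * e.2.2 i))) := by
  set c : D κ g δ := (0, 0, fun i => 2 * (d.2.2 i * e.2.2 i)) with hc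
  refine Prod.ext ?_ ?_
  · rw [qadd_fst]
    funext i
    show (Fmap α β t d).1 i + (Fmap α β t e).1 i = _
    unfold Fmap
    by_cases h : i.val < κ
    · simp only [dif_pos h]
      show _ = (d + e + c).1 ⟨i.val, h⟩
      simp [hc]
    · simp only [dif_neg h]
      simp
  · funext j
    rw [qadd_snd]
    show Fy t d j.val + Fy t e j.val + 2 * (Fy t d j.val * Fy t e j.val) = Fy t (d+e+c) j.val
    have hc22 : (d+e+c).2.2 = fun i => d.2.2 i + e.2.2 i + 2 * (d.2.2 i * e.2.2 i) := by
      funext i; simp [hc]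
    have hc21 : (d+e+c).2.1 = d.2.1 + e.2.1 := by
      funext i; simp [hc]
    rcases lt_or_ge j.val g with h | h
    · rw [Fy_lt d h, Fy_lt e h, Fy_lt (d+e+c) h, hc21]
      have : ∀ a b : ZMod 2, 2*((a:ZMod 2).val:ZMod 4) + 2*(b.val:ZMod 4)
          + 2*(2*(a.val:ZMod 4)*(2*(b.val:ZMod 4))) = 2*(((a+b).val:ZMod 4)) := by decide
      exact this _ _
    rcases lt_or_ge j.val (g + δ) with h2 | h2
    · rw [Fy_mid d h h2, Fy_mid e h h2, Fy_mid (d+e+c) h h2, hc22]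
    rcases eq_or_lt_of_le h2 with h3 | h3
    · rw [← h3, Fy_c1, Fy_c1, Fy_c1, hc22]
      have e1 : Lsum (· < t1 t) (fun i => d.2.2 i + e.2.2 i + 2 * (d.2.2 i * e.2.2 i)) =
          Lsum (· < t1 t) (d.2.2 + e.2.2 + fun i => 2 * (d.2.2 i * e.2.2 i)) :=
        Lsum_congr _ fun i => rfl
      rw [e1, Lsum_add, Lsum_add,
        Lsum_twomul (t := t) _ (fun n hn => lt_of_lt_of_le hn (t1_le t)) _ _ hd,
        show (2 : ZMod 4) * (Lsum (· < t1 t) d.2.2 * Lsum (· < t1 t) e.2.2)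
          = (2 * Lsum (· < t1 t) d.2.2) * Lsum (· < t1 t) e.2.2 by ring,
        two_Lsum (t := t) _ (fun n hn => lt_of_lt_of_le hn (t1_le t)) _ hd, zero_mul,
        add_zero]
    rcases eq_or_lt_of_le (Nat.succ_le_of_lt h3) with h4 | h4
    · rw [show j.val = g + δ + 1 by omega, Fy_c2, Fy_c2, Fy_c2, hc22]
      have e1 : Lsum (S2 t) (fun i => d.2.2 i + e.2.2 i + 2 * (d.2.2 i * e.2.2 i)) =
          Lsum (S2 t) (d.2.2 + e.2.2 + fun i => 2 * (d.2.2 i * e.2.2 i)) :=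
        Lsum_congr _ fun i => rfl
      rw [e1, Lsum_add, Lsum_add,
        Lsum_twomul (t := t) _ (fun n hn => S2_lt hn) _ _ hd,
        show (2 : ZMod 4) * (Lsum (S2 t) d.2.2 * Lsum (S2 t) e.2.2)
          = (2 * Lsum (S2 t) d.2.2) * Lsum (S2 t) e.2.2 by ring,
        two_Lsum (t := t) _ (fun n hn => S2_lt hn) _ hd, zero_mul, add_zero]
    · rw [Fy_hi d h4, Fy_hi e h4, Fy_hi (d+e+c) h4]
      ring

lemma Fmap_snd (α β : ℕ) {κ g δ : ℕ} (t : ℕ) (d : D κ g δ) (j : Fin β) :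
    (Fmap α β t d).2 j = Fy t d j.val := rfl

lemma Lsum_ind' {δ : ℕ} (S : ℕ → Prop) [DecidablePred S] (mu : Fin δ → ZMod 4) (i0 : Fin δ)
    (hmu : ∀ i, mu i = if i = i0 then 1 else 0) :
    Lsum S mu = if S i0.val then 1 else 0 := by
  rw [Lsum_congr S (fun i => hmu i)]; exact Lsum_ind S i0

lemma Lsum_mul_ind' {δ : ℕ} (S : ℕ → Prop) [DecidablePred S] (f mu : Fin δ → ZMod 4)
    (i0 : Fin δ) (hmu : ∀ i, mu i = if i = i0 then 1 else 0) :
    Lsum S (fun i => 2 * (f i * mu i)) = if S i0.val then 2 * f i0 else 0 := by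
  rw [Lsum_congr S (fun i => by rw [hmu i] : ∀ i, 2 * (f i * mu i) = 2 * (f i * if i = i0 then 1 else 0))]
  exact Lsum_mul_ind S f i0

lemma key_gen (α β : ℕ) {κ g δ : ℕ} (t : ℕ) (hgd : g + δ ≤ β)
    (S : ℕ → Prop) [DecidablePred S] (c : Fin β) (hc : g + δ ≤ c.val)
    (hcol : ∀ d' : D κ g δ, Fy t d' c.val = Lsum S d'.2.2)
    (d : D κ g δ)
    (hmem : ∀ e : D κ g δ, qadd (Fmap α β t d) (Fmap α β t e) ∈ Set.range (Fmap α β (κ := κ) (g := g) (δ := δ) t))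
    (j0 : Fin δ) (hj0 : S j0.val) :
    2 * Lsum S d.2.2 = 2 * d.2.2 j0 := by
  classical
  set mu : Fin δ → ZMod 4 := fun i => if i = j0 then 1 else 0 with hmu
  obtain ⟨d', hd'⟩ := hmem (0, 0, mu)
  set lam := d.2.2 with hlam
  -- mid coordinates
  have hmid : ∀ i : Fin δ, d'.2.2 i = lam i + mu i + 2 * (lam i * mu i) := by
    intro i
    have hi : g + i.val < β := by omega
    have h0 : Fy t d' (g + i.val)
        = (qadd (Fmap α β t d) (Fmap α β t (0, 0, mu))).2 ⟨g + i.val, hi⟩ :=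
      congrFun (congrArg Prod.snd hd') ⟨g + i.val, hi⟩
    rw [qadd_snd, Fmap_snd, Fmap_snd] at h0
    simp only [Fin.val_mk] at h0
    rw [Fy_mid d' (by omega) (by omega), Fy_mid d (by omega) (by omega),
      Fy_mid (0, 0, mu) (by omega) (by omega)] at h0
    have hix : ∀ (f : Fin δ → ZMod 4) (h : g + i.val - g < δ), f ⟨g + i.val - g, h⟩ = f i :=
      fun f h => congrArg f (Fin.ext (show g + i.val - g = i.val by omega))
    rw [hix d'.2.2, hix d.2.2, hix (0, 0, mu).2.2] at h0
    exact h0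
  -- column equation
  have hcoleq : Fy t d' c.val = (qadd (Fmap α β t d) (Fmap α β t (0, 0, mu))).2 c :=
    congrFun (congrArg Prod.snd hd') c
  rw [qadd_snd, Fmap_snd, Fmap_snd, hcol d', hcol d, hcol (0, 0, mu)] at hcoleq
  have hLd' : Lsum S d'.2.2
      = Lsum S lam + Lsum S mu + Lsum S (fun i => 2 * (lam i * mu i)) := by
    rw [Lsum_congr S hmid]
    have : Lsum S (fun i => lam i + mu i + 2 * (lam i * mu i))
        = Lsum S (lam + mu + fun i => 2 * (lam i * mu i)) := Lsum_congr S (fun i => rfl)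
    rw [this, Lsum_add, Lsum_add]
  rw [hLd'] at hcoleq
  have hmu1 : Lsum S ((0, 0, mu) : D κ g δ).2.2 = 1 := by
    rw [show ((0, 0, mu) : D κ g δ).2.2 = mu from rfl,
      Lsum_ind' S mu j0 (fun i => rfl), if_pos hj0]
  have hmu2 : Lsum S (fun i => 2 * (lam i * mu i)) = 2 * lam j0 := by
    rw [Lsum_mul_ind' S lam mu j0 (fun i => rfl), if_pos hj0]
  rw [show ((0, 0, mu) : D κ g δ).2.2 = mu from rfl] at hcoleq
  rw [Lsum_ind' S mu j0 (fun i => rfl), if_pos hj0] at hcoleq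
  rw [hmu2] at hcoleq
  have h := add_left_cancel hcoleq
  rw [mul_one] at h
  exact h.symm

lemma card_filter_lt (δ m : ℕ) (hm : m ≤ δ) :
    (Finset.univ.filter fun i : Fin δ => i.val < m).card = m := by
  rcases eq_or_lt_of_le hm with h | h
  · subst h
    rw [Finset.filter_true_of_mem (fun i _ => i.isLt)]
    simp
  · have he : (Finset.univ.filter fun i : Fin δ => i.val < m) = Finset.Iio ⟨m, h⟩ := by
      ext i
      simp [Fin.lt_def]
    rw [he, Fin.card_Iio]

lemma sum_trick {δ : ℕ} (m : ℕ) (hm : m ≤ δ) (hme : Even m) (lam : Fin δ → ZMod 4)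
    (hkey : ∀ j0 : Fin δ, j0.val < m → 2 * Lsum (· < m) lam = 2 * lam j0) :
    2 * Lsum (· < m) lam = 0 := by
  classical
  set x := 2 * Lsum (· < m) lam with hx
  have hLs : Lsum (· < m) lam = ∑ j ∈ Finset.univ.filter (fun i : Fin δ => i.val < m), lam j := by
    rw [Lsum, Finset.sum_filter]
  have hsum : x = ∑ j ∈ Finset.univ.filter (fun i : Fin δ => i.val < m), (2 * lam j) := by
    rw [hx, hLs, Finset.mul_sum]
  have hconst : ∑ j ∈ Finset.univ.filter (fun i : Fin δ => i.val < m), (2 * lam j)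
      = m • x := by
    rw [Finset.sum_congr rfl (fun j hj => (hkey j (Finset.mem_filter.mp hj).2).symm),
      Finset.sum_const, card_filter_lt δ m hm]
  have hx2 : x + x = 0 := by
    have h4 : ∀ y : ZMod 4, 2 * y + 2 * y = 0 := by decide
    rw [hx]; exact h4 _
  obtain ⟨r, hr⟩ := hme
  calc x = m • x := hsum.trans hconst
    _ = r • x + r • x := by rw [hr, add_smul]
    _ = r • (x + x) := (smul_add r x x).symm
    _ = 0 := by rw [hx2, smul_zero]

lemma Fmap_zero (α β : ℕ) {κ g δ : ℕ} (t : ℕ) : Fmap α β t (0 : D κ g δ) = 0 := by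
  have h := Fmap_add α β t (0 : D κ g δ) 0
  rw [add_zero] at h
  exact (left_eq_add.mp h)

theorem kernel_eq (α β : ℕ) {κ g δ : ℕ} (t : ℕ) (hgd : g + δ ≤ β)
    (htδ : t ≤ δ) (hc1 : 0 < t → g + δ < β) (hc2 : Odd t → g + δ + 1 < β) (ht2 : t ≠ 1) :
    kernelK (Phi '' Set.range (Fmap α β (κ := κ) (g := g) (δ := δ) t))
      = Phi '' (Fmap α β t '' Kset κ g δ t) := by
  apply Set.Subset.antisymm
  · intro x hx
    have hx' : (fun y => x + y) '' (Phi '' Set.range (Fmap α β t))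
        = Phi '' Set.range (Fmap α β (κ := κ) (g := g) (δ := δ) t) := hx
    have hx0 : x ∈ Phi '' Set.range (Fmap α β (κ := κ) (g := g) (δ := δ) t) := by
      rw [← hx']
      refine ⟨Phi (Fmap α β t 0), ⟨Fmap α β t 0, ⟨0, rfl⟩, rfl⟩, ?_⟩
      show x + Phi (Fmap α β t 0) = x
      rw [Fmap_zero, Phi_zero, add_zero]
    obtain ⟨w, ⟨d, rfl⟩, rfl⟩ := hx0
    refine ⟨Fmap α β t d, ⟨d, ?_, rfl⟩, rfl⟩
    have hmem : ∀ e : D κ g δ, qadd (Fmap α β t d) (Fmap α β t e)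
        ∈ Set.range (Fmap α β (κ := κ) (g := g) (δ := δ) t) := by
      intro e
      have h1 : Phi (Fmap α β t d) + Phi (Fmap α β t e)
          ∈ Phi '' Set.range (Fmap α β (κ := κ) (g := g) (δ := δ) t) := by
        rw [← hx']
        exact ⟨Phi (Fmap α β t e), ⟨Fmap α β t e, ⟨e, rfl⟩, rfl⟩, rfl⟩
      rw [Phi_qadd] at h1
      obtain ⟨w', hw', heq⟩ := h1
      exact (Phi_inj heq) ▸ hw'
    intro i0 hi0
    have hpos : 0 < t := by omega
    have hcol1 : g + δ < β := hc1 hpos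
    have hcolA : ∀ d' : D κ g δ, Fy t d' ((⟨g + δ, hcol1⟩ : Fin β)).val
        = Lsum (· < t1 t) d'.2.2 := fun d' => Fy_c1 d'
    have keyA : ∀ j0 : Fin δ, j0.val < t1 t →
        2 * Lsum (· < t1 t) d.2.2 = 2 * d.2.2 j0 := fun j0 hj =>
      key_gen α β t hgd _ ⟨g + δ, hcol1⟩ (le_refl _) hcolA d hmem j0 hj
    have h2L : 2 * Lsum (· < t1 t) d.2.2 = 0 :=
      sum_trick (t1 t) (le_trans (t1_le t) htδ) (t1_even t ht2) d.2.2 keyA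
    have hA : ∀ j0 : Fin δ, j0.val < t1 t → 2 * d.2.2 j0 = 0 := fun j0 hj => by
      rw [← keyA j0 hj]; exact h2L
    by_cases hcase : i0.val < t1 t
    · exact hA i0 hcase
    · have hodd : Odd t := by
        rcases Nat.even_or_odd t with he | ho
        · exfalso
          have : t1 t = t := by simp [t1, he]
          omega
        · exact ho
      have ht1v : t1 t = t - 1 := by
        simp [t1, Nat.not_even_iff_odd.mpr hodd]
      have ht3 : 3 ≤ t := by
        have := Nat.odd_iff.mp hodd
        omega
      have hi0v : i0.val = t - 1 := by omega
      have hcol2 : g + δ + 1 < β := hc2 hodd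
      have hcolB : ∀ d' : D κ g δ, Fy t d' ((⟨g + δ + 1, hcol2⟩ : Fin β)).val
          = Lsum (S2 t) d'.2.2 := fun d' => Fy_c2 d'
      have keyB : ∀ j0 : Fin δ, S2 t j0.val →
          2 * Lsum (S2 t) d.2.2 = 2 * d.2.2 j0 := fun j0 hj =>
        key_gen α β t hgd _ ⟨g + δ + 1, hcol2⟩ (by show g + δ ≤ g + δ + 1; omega) hcolB d hmem j0 hj
      have hδ0 : 0 < δ := by omega
      have h00 : 2 * d.2.2 ⟨0, hδ0⟩ = 0 := hA ⟨0, hδ0⟩ (by show 0 < t1 t; omega)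
      have e0 := keyB ⟨0, hδ0⟩ ⟨hodd, Or.inl rfl⟩
      have e1 := keyB ⟨t - 1, by omega⟩ ⟨hodd, Or.inr rfl⟩
      have hieq : i0 = ⟨t - 1, by omega⟩ := Fin.ext (by show i0.val = t - 1; omega)
      rw [hieq, ← e1, e0]
      exact h00
  · rintro x ⟨w, ⟨d, hd, rfl⟩, rfl⟩
    show (fun y => Phi (Fmap α β t d) + y) '' (Phi '' Set.range (Fmap α β t))
        = Phi '' Set.range (Fmap α β (κ := κ) (g := g) (δ := δ) t)
    apply Set.Subset.antisymm
    · rintro z ⟨_, ⟨w', ⟨e, rfl⟩, rfl⟩, rfl⟩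
      show Phi (Fmap α β t d) + Phi (Fmap α β t e) ∈ _
      rw [Phi_qadd, qadd_closure α β t d e hd]
      exact ⟨_, ⟨_, rfl⟩, rfl⟩
    · rintro z ⟨w', ⟨e, rfl⟩, rfl⟩
      refine ⟨Phi (Fmap α β t (d + e + (0, 0, fun i => 2 * (d.2.2 i * e.2.2 i)))),
        ⟨_, ⟨_, rfl⟩, rfl⟩, ?_⟩
      show Phi (Fmap α β t d) + Phi (Fmap α β t (d + e + (0, 0, fun i => 2 * (d.2.2 i * e.2.2 i))))
          = Phi (Fmap α β t e)
      rw [Phi_qadd, ← qadd_closure α β t d e hd, qadd_invol]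

lemma card_tor (δ t : ℕ) (ht : t ≤ δ) :
    Nat.card {f : Fin δ → ZMod 4 // ∀ i : Fin δ, i.val < t → 2 * f i = 0}
      = 2 ^ t * 4 ^ (δ - t) := by
  classical
  have e1 : {f : Fin δ → ZMod 4 // ∀ i : Fin δ, i.val < t → 2 * f i = 0}
      ≃ ∀ i : Fin δ, {z : ZMod 4 // i.val < t → 2 * z = 0} :=
    Equiv.subtypePiEquivPi (p := fun (i : Fin δ) (z : ZMod 4) => i.val < t → 2 * z = 0)
  rw [Nat.card_congr e1, Nat.card_eq_fintype_card, Fintype.card_pi]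
  have e2 : ∀ i : Fin δ, Fintype.card {z : ZMod 4 // i.val < t → 2 * z = 0}
      = if i.val < t then 2 else 4 := by
    intro i
    by_cases h : i.val < t
    · rw [if_pos h]
      rw [Fintype.card_congr (Equiv.subtypeEquivRight (q := fun z : ZMod 4 => 2 * z = 0) (fun z => by simp [h]))]
      decide
    · rw [if_neg h]
      rw [Fintype.card_congr (Equiv.subtypeUnivEquiv (fun z hh => absurd hh h))]
      decide
  rw [Finset.prod_congr rfl (fun i _ => e2 i), Finset.prod_ite, Finset.prod_const,
    Finset.prod_const, card_filter_lt δ t ht]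
  have hcc : (Finset.univ.filter fun i : Fin δ => ¬ i.val < t).card = δ - t := by
    have h1 := Finset.card_filter_add_card_filter_not
      (s := (Finset.univ : Finset (Fin δ))) (p := fun i : Fin δ => i.val < t)
    rw [card_filter_lt δ t ht] at h1
    simp only [Finset.card_univ, Fintype.card_fin] at h1
    omega
  rw [hcc]

lemma card_Kset (κ g δ t : ℕ) (ht : t ≤ δ) :
    Nat.card (Kset κ g δ t) = 2 ^ (κ + g + (2 * δ - t)) := by
  classical
  have e1 : Kset κ g δ t ≃ (Fin κ → ZMod 2) × (Fin g → ZMod 2) ×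
      {f : Fin δ → ZMod 4 // ∀ i : Fin δ, i.val < t → 2 * f i = 0} :=
    { toFun := fun d => (d.1.1, d.1.2.1, ⟨d.1.2.2, d.2⟩)
      invFun := fun p => ⟨(p.1, p.2.1, p.2.2.1), p.2.2.2⟩
      left_inv := fun d => rfl
      right_inv := fun p => rfl }
  rw [Nat.card_congr e1, Nat.card_prod, Nat.card_prod, card_tor δ t ht,
    Nat.card_eq_fintype_card, Nat.card_eq_fintype_card]
  simp only [Fintype.card_fun, Fintype.card_fin, ZMod.card]
  rw [show (4:ℕ) = 2^2 from rfl, ← pow_mul, ← pow_add, ← pow_add, ← pow_add]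
  congr 1
  omega

lemma finrank_eq_of_card {M : Type} [AddCommGroup M] [Module (ZMod 2) M]
    (W : Submodule (ZMod 2) M) [Finite W] (n : ℕ) (h : Nat.card W = 2 ^ n) :
    Module.finrank (ZMod 2) W = n := by
  have : Fintype W := Fintype.ofFinite W
  have h2 := Module.card_eq_pow_finrank (K := ZMod 2) (V := W)
  rw [Nat.card_eq_fintype_card] at h
  rw [ZMod.card] at h2
  exact Nat.pow_right_injective (by norm_num) (h2.symm.trans h)

def toSubmodule {M : Type} [AddCommGroup M] [Module (ZMod 2) M]
    (hM : ∀ (c : ZMod 2) (x : M), c • x = 0 ∨ c • x = x)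
    (S : Set M) (h0 : (0 : M) ∈ S)
    (hadd : ∀ x y, x ∈ S → y ∈ S → x + y ∈ S) : Submodule (ZMod 2) M :=
  { carrier := S
    zero_mem' := h0
    add_mem' := fun hx hy => hadd _ _ hx hy
    smul_mem' := by
      intro c x hx
      rcases hM c x with h | h
      · rw [h]; exact h0
      · rw [h]; exact hx }

lemma kernelK_zero {α β : ℕ} (C : Set (Bin α β)) : (0 : Bin α β) ∈ kernelK C := by
  show (fun y => 0 + y) '' C = C
  have : (fun y : Bin α β => 0 + y) = id := by funext y; simp
  rw [this, Set.image_id]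

lemma kernelK_add {α β : ℕ} {C : Set (Bin α β)} {x y : Bin α β}
    (hx : x ∈ kernelK C) (hy : y ∈ kernelK C) : x + y ∈ kernelK C := by
  show (fun z => (x + y) + z) '' C = C
  have : (fun z : Bin α β => (x + y) + z) = (fun z => x + z) ∘ (fun z => y + z) := by
    funext z; simp [add_assoc]
  rw [this, Set.image_comp]
  rw [show (fun z : Bin α β => y + z) '' C = C from hy, show (fun z : Bin α β => x + z) '' C = C from hx]

lemma smul_zmod2 {M : Type} [AddCommGroup M] [Module (ZMod 2) M]
    (c : ZMod 2) (x : M) : c • x = 0 ∨ c • x = x := by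
  have : c = 0 ∨ c = 1 := by revert c; decide
  rcases this with h | h
  · left; rw [h, zero_smul]
  · right; rw [h, one_smul]

lemma zmod2_self_add (a : ZMod 2) : a + a = 0 := by revert a; decide

lemma tor_eq (α β : ℕ) {κ g δ : ℕ} (t : ℕ) (hκα : κ ≤ α) (hgd : g + δ ≤ β) :
    {x : Amb α β | x ∈ Set.range (Fmap α β (κ := κ) (g := g) (δ := δ) t) ∧ 2 • x = 0}
      = Fmap α β t '' Kset κ g δ δ := by
  ext x
  constructor
  · rintro ⟨⟨d, rfl⟩, h2⟩
    refine ⟨d, ?_, rfl⟩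
    have hdd : Fmap α β t (d + d) = 0 := by
      rw [Fmap_add]
      rw [two_smul] at h2
      exact h2
    have hd0 : d + d = 0 := Fmap_inj α β t hκα hgd (by rw [hdd, Fmap_zero])
    intro i _
    have h3 := congrFun (congrArg (fun z : D κ g δ => z.2.2) hd0) i
    have h4 : d.2.2 i + d.2.2 i = 0 := h3
    rw [two_mul]
    exact h4
  · rintro ⟨d, hd, rfl⟩
    refine ⟨⟨d, rfl⟩, ?_⟩
    have hd0 : d + d = 0 := by
      refine Prod.ext ?_ (Prod.ext ?_ ?_)
      · funext i
        exact zmod2_self_add (d.1 i)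
      · funext i
        exact zmod2_self_add (d.2.1 i)
      · funext i
        have h1 := hd i i.isLt
        rw [two_mul] at h1
        exact h1
    rw [two_smul, ← Fmap_add, hd0, Fmap_zero]

lemma proj_eq (α β : ℕ) {κ g δ : ℕ} (t : ℕ) (hκα : κ ≤ α) :
    Prod.fst '' (Fmap α β (κ := κ) (g := g) (δ := δ) t '' Kset κ g δ δ)
      = {x : Fin α → ZMod 2 | ∀ i : Fin α, κ ≤ i.val → x i = 0} := by
  ext x
  constructor
  · rintro ⟨w, ⟨d, hd, rfl⟩, rfl⟩
    intro i hi
    show (if h : i.val < κ then d.1 ⟨i.val, h⟩ else 0) = 0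
    rw [dif_neg (by omega)]
  · intro hx
    set dd : D κ g δ := (fun i => x ⟨i.val, lt_of_lt_of_le i.isLt hκα⟩, 0, 0) with hdd
    have hddK : dd ∈ Kset κ g δ δ := by
      intro i _
      show 2 * ((0 : Fin δ → ZMod 4) i) = 0
      simp
    refine ⟨Fmap α β t dd, ⟨dd, hddK, rfl⟩, ?_⟩
    funext i
    show (if h : i.val < κ then dd.1 ⟨i.val, h⟩ else 0) = x i
    by_cases h : i.val < κ
    · rw [dif_pos h]
    · rw [dif_neg h]
      exact (hx i (by omega)).symm

lemma card_D (κ g δ : ℕ) : Nat.card (D κ g δ) = 2 ^ (κ + g + 2 * δ) := by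
  rw [Nat.card_prod, Nat.card_prod, Nat.card_eq_fintype_card, Nat.card_eq_fintype_card,
    Nat.card_eq_fintype_card]
  simp only [Fintype.card_fun, Fintype.card_fin, ZMod.card]
  rw [show (4:ℕ) = 2^2 from rfl, ← pow_mul, ← pow_add, ← pow_add]
  congr 1
  omega

def Vsub (α κ : ℕ) : Submodule (ZMod 2) (Fin α → ZMod 2) :=
  toSubmodule smul_zmod2 {x : Fin α → ZMod 2 | ∀ i : Fin α, κ ≤ i.val → x i = 0}
    (fun i _ => rfl)
    (fun x y hx hy i hi => by
      show x i + y i = 0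
      rw [hx i hi, hy i hi, add_zero])

lemma card_Vsub (α κ : ℕ) (hκα : κ ≤ α) : Nat.card (Vsub α κ) = 2 ^ κ := by
  have e : Vsub α κ ≃ (Fin κ → ZMod 2) :=
    { toFun := fun w => fun i => w.1 ⟨i.val, lt_of_lt_of_le i.isLt hκα⟩
      invFun := fun a => ⟨fun i => if h : i.val < κ then a ⟨i.val, h⟩ else 0,
        fun i hi => dif_neg (by omega)⟩
      left_inv := fun w => Subtype.ext (by
        dsimp only
        funext i
        by_cases h : i.val < κ
        · rw [dif_pos h]
        · rw [dif_neg h]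
          exact (w.2 i (by omega)).symm)
      right_inv := fun a => by
        dsimp only
        funext i
        rw [dif_pos (show ((⟨i.val, lt_of_lt_of_le i.isLt hκα⟩ : Fin α)).val < κ from i.isLt)] }
  rw [Nat.card_congr e, Nat.card_eq_fintype_card]
  simp [Fintype.card_fun]

theorem main_param (α β κ g δ t : ℕ) (hκα : κ ≤ α) (hgd : g + δ ≤ β) (htδ : t ≤ δ)
    (hc1 : 0 < t → g + δ < β) (hc2 : Odd t → g + δ + 1 < β) (ht2 : t ≠ 1) :
    ∃ C : AddSubgroup (Amb α β), IsTypeOf α β (κ + g) δ κ C ∧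
      kerDim (Phi '' (C : Set (Amb α β))) = κ + g + (2 * δ - t) := by
  classical
  set Fh : D κ g δ →+ Amb α β := AddMonoidHom.mk' (Fmap α β t) (Fmap_add α β t) with hFh
  have hcoe : (Fh.range : Set (Amb α β))
      = Set.range (Fmap α β (κ := κ) (g := g) (δ := δ) t) := rfl
  have hinj := Fmap_inj α β t hκα hgd
  have hset : {x : Amb α β | x ∈ Fh.range ∧ 2 • x = 0}
      = Fmap α β t '' Kset κ g δ δ := by
    rw [← tor_eq α β t hκα hgd]
    rfl
  refine ⟨Fh.range, ⟨?_, ?_, ?_⟩, ?_⟩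
  · calc Nat.card Fh.range
        = Nat.card (Set.range (Fmap α β (κ := κ) (g := g) (δ := δ) t)) :=
          Nat.card_congr (Equiv.setCongr hcoe)
      _ = Nat.card (D κ g δ) := (Nat.card_congr (Equiv.ofInjective _ hinj)).symm
      _ = 2 ^ (κ + g + 2 * δ) := card_D κ g δ
  · rw [hset, Nat.card_image_of_injective hinj _, card_Kset κ g δ δ (le_refl δ)]
    congr 1
    omega
  · rw [hset, proj_eq α β t hκα]
    have hv : {x : Fin α → ZMod 2 | ∀ i : Fin α, κ ≤ i.val → x i = 0}
        = (Vsub α κ : Set (Fin α → ZMod 2)) := rfl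
    rw [hv, Submodule.span_eq]
    exact finrank_eq_of_card (Vsub α κ) κ (card_Vsub α κ hκα)
  · show Module.finrank (ZMod 2)
        (Submodule.span (ZMod 2) (kernelK (Phi '' (Fh.range : Set (Amb α β)))))
        = κ + g + (2 * δ - t)
    rw [hcoe]
    have hker := kernel_eq α β (κ := κ) (g := g) t hgd htδ hc1 hc2 ht2
    set W : Submodule (ZMod 2) (Bin α β) := toSubmodule smul_zmod2
      (kernelK (Phi '' Set.range (Fmap α β (κ := κ) (g := g) (δ := δ) t)))
      (kernelK_zero _) (fun x y hx hy => kernelK_add hx hy) with hW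
    have hWcoe : kernelK (Phi '' Set.range (Fmap α β (κ := κ) (g := g) (δ := δ) t))
        = (W : Set (Bin α β)) := rfl
    rw [hWcoe, Submodule.span_eq]
    refine finrank_eq_of_card W _ ?_
    have h1 : Nat.card W = Nat.card (Phi '' (Fmap α β t '' Kset κ g δ t)) := by
      apply Nat.card_congr
      apply Equiv.setCongr
      rw [← hWcoe, hker]
    rw [h1, Nat.card_image_of_injective Phi_inj _,
      Nat.card_image_of_injective hinj _, card_Kset κ g δ t htδ]

/-- for every admissible kernel dimension `k` (depending on
`s = β−(γ−κ)−δ`), there is a `Z2Z4`-additive code of type `(α,β;γ,δ;κ)` whose Gray image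
has kernel dimension `k`. -/
theorem exists_code_with_kernel_dim (α β γ δ κ k : ℕ)
    (h1 : 0 < α + β) (h2 : 0 < δ + γ) (h3 : δ + γ ≤ β + κ) (h4 : κ ≤ min α γ)
    (hk : (2 ≤ β - (γ - κ) - δ ∧
            ((γ + δ ≤ k ∧ k + 2 ≤ γ + 2 * δ) ∨ k = γ + 2 * δ)) ∨
          (β - (γ - κ) - δ = 1 ∧
            ∃ kb : ℕ, Even kb ∧ kb ≤ 2 * (δ / 2) ∧ k + kb = γ + 2 * δ) ∨
          (β - (γ - κ) - δ = 0 ∧ k = γ + 2 * δ)) :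
    ∃ C : AddSubgroup (Amb α β), IsTypeOf α β γ δ κ C ∧
      kerDim (Phi '' (C : Set (Amb α β))) = k := by
  have hκα : κ ≤ α := le_trans h4 (min_le_left α γ)
  have hκγ : κ ≤ γ := le_trans h4 (min_le_right α γ)
  have hgd : (γ - κ) + δ ≤ β := by omega
  have main : ∀ t : ℕ, t ≤ δ → (0 < t → (γ - κ) + δ < β) →
      (Odd t → (γ - κ) + δ + 1 < β) → t ≠ 1 → κ + (γ - κ) + (2 * δ - t) = k →
      ∃ C : AddSubgroup (Amb α β), IsTypeOf α β γ δ κ C ∧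
        kerDim (Phi '' (C : Set (Amb α β))) = k := by
    intro t ht1 ht2 ht3 ht4 ht5
    obtain ⟨C, hC, hkd⟩ := main_param α β κ (γ - κ) δ t hκα hgd ht1 ht2 ht3 ht4
    rw [show κ + (γ - κ) = γ from by omega] at hC
    exact ⟨C, hC, hkd.trans ht5⟩
  rcases hk with ⟨hs, ⟨hk1, hk2⟩ | hkeq⟩ | ⟨hs, kb, hkbe, hkble, hkbeq⟩ | ⟨hs, hkeq⟩
  · -- s ≥ 2, middle range
    refine main (γ + 2 * δ - k) (by omega) (fun _ => by omega) (fun _ => by omega)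
      (by omega) (by omega)
  · -- s ≥ 2, linear
    refine main 0 (by omega) (by omega) ?_ (by omega) (by omega)
    intro ho
    exact absurd (Nat.odd_iff.mp ho) (by omega)
  · -- s = 1
    have hkbe' := Nat.even_iff.mp hkbe
    refine main kb (by omega) (fun _ => by omega) ?_ (by omega) (by omega)
    intro ho
    exact absurd (Nat.odd_iff.mp ho) (by omega)
  · -- s = 0
    refine main 0 (by omega) (by omega) ?_ (by omega) (by omega)
    intro ho
    exact absurd (Nat.odd_iff.mp ho) (by omega)
end

section
/- Let 𝒞 be a Z2Z4-additive code of type (α,β;γ,δ;κ) and C = Φ(𝒞). If rank(C) = γ+2δ+r̄ and ker(C) = γ+2δ−k̄ with k̄ ≥ 2, then 1 ≤ r̄ ≤ k̄(k̄−1)/2. -/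
namespace ZHelp

variable {α β : ℕ}

lemma amb_ext {x y : Amb α β} (h1 : ∀ i, x.1 i = y.1 i) (h2 : ∀ i, x.2 i = y.2 i) :
    x = y := by
  obtain ⟨x1, x2⟩ := x; obtain ⟨y1, y2⟩ := y
  simp only [Prod.mk.injEq]
  exact ⟨funext h1, funext h2⟩

lemma bin_ext {x y : Bin α β} (h1 : ∀ i, x.1 i = y.1 i) (h2 : ∀ i, x.2 i = y.2 i) :
    x = y := by
  obtain ⟨x1, x2⟩ := x; obtain ⟨y1, y2⟩ := y
  simp only [Prod.mk.injEq]
  exact ⟨funext h1, funext h2⟩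

lemma amb4 (x : Amb α β) : x + x + (x + x) = 0 := by
  have h2 : ∀ a : ZMod 2, a + a + (a + a) = 0 := by decide
  have h4 : ∀ a : ZMod 4, a + a + (a + a) = 0 := by decide
  exact amb_ext (fun i => h2 (x.1 i)) (fun i => h4 (x.2 i))

lemma Phi_add (u v : Amb α β) : Phi u + Phi v = Phi (u + v + (u * v + u * v)) := by
  have h2 : ∀ a b : ZMod 2, a + b = a + b + (a * b + a * b) := by decide
  have h4 : ∀ a b : ZMod 4,
      grayPair a + grayPair b = grayPair (a + b + (a * b + a * b)) := by decide
  exact bin_ext (fun i => h2 (u.1 i) (v.1 i)) (fun i => h4 (u.2 i) (v.2 i))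

lemma Phi_zero : Phi (0 : Amb α β) = 0 := by
  have h4 : grayPair 0 = 0 := by decide
  exact bin_ext (fun i => rfl) (fun i => h4)

lemma Phi_injective : Function.Injective (Phi (α := α) (β := β)) := by
  have hg : Function.Injective grayPair := by decide
  intro u v h
  have h1 := congrArg Prod.fst h
  have h2 := congrArg Prod.snd h
  exact amb_ext (fun i => congrFun h1 i) (fun i => hg (congrFun h2 i))

lemma Phi_add_double (y x : Amb α β) : Phi (y + (x + x)) = Phi y + Phi (x + x) := by
  have h := Phi_add y (x + x)
  have hz : y * (x + x) + y * (x + x) = 0 := by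
    have h4 := amb4 (y * x)
    linear_combination h4
  rw [hz, add_zero] at h
  exact h.symm

lemma Phi_add' (a y : Amb α β) :
    Phi (a + y) = Phi a + Phi y + Phi (a * y + a * y) := by
  have key : a + y = (a + y + (a * y + a * y)) + (a * y + a * y) := by
    have h4 := amb4 (a * y)
    linear_combination -h4
  calc Phi (a + y) = Phi ((a + y + (a * y + a * y)) + (a * y + a * y)) := by rw [← key]
    _ = Phi (a + y + (a * y + a * y)) + Phi (a * y + a * y) := Phi_add_double _ _
    _ = Phi a + Phi y + Phi (a * y + a * y) := by rw [← Phi_add]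

lemma Phi_double_add (x y : Amb α β) :
    Phi ((x + x) + (y + y)) = Phi (x + x) + Phi (y + y) :=
  Phi_add_double (x + x) y

lemma Phi_sum_doubles {ι : Type*} (s : Finset ι) (f : ι → Amb α β) :
    Phi (∑ i ∈ s, (f i + f i)) = ∑ i ∈ s, Phi (f i + f i) := by
  induction s using Finset.cons_induction with
  | empty => simpa using Phi_zero
  | cons j s hj ih =>
    rw [Finset.sum_cons, Finset.sum_cons, ← ih]
    have hs : (∑ i ∈ s, (f i + f i)) = (∑ i ∈ s, f i) + (∑ i ∈ s, f i) := by
      rw [Finset.sum_add_distrib]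
    rw [hs]
    exact Phi_double_add _ _

section Code

variable (C : AddSubgroup (Amb α β))

def Kset : Set (Amb α β) := {u | u ∈ C ∧ ∀ v ∈ C, u * v + u * v ∈ C}

variable {C}

lemma mem_Kset_of_double (x : Amb α β) (h : x + x ∈ C) : x + x ∈ Kset C := by
  refine ⟨h, fun v hv => ?_⟩
  have he : (x + x) * v + (x + x) * v = (x * v + x * v) + (x * v + x * v) := by ring
  rw [he, amb4]
  exact C.zero_mem

lemma double_mem_Kset {w : Amb α β} (hw : w ∈ C) : w + w ∈ Kset C :=
  mem_Kset_of_double w (C.add_mem hw hw)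

lemma Kset_add {a b : Amb α β} (ha : a ∈ Kset C) (hb : b ∈ Kset C) :
    a + b ∈ Kset C := by
  refine ⟨C.add_mem ha.1 hb.1, fun v hv => ?_⟩
  have he : (a + b) * v + (a + b) * v = (a * v + a * v) + (b * v + b * v) := by ring
  rw [he]
  exact C.add_mem (ha.2 v hv) (hb.2 v hv)

variable (C)

def Ksub : AddSubgroup (Amb α β) where
  carrier := Kset C
  zero_mem' := ⟨C.zero_mem, fun v _ => by simpa using C.zero_mem⟩
  add_mem' := Kset_add
  neg_mem' := fun {a} ha => by
    refine ⟨C.neg_mem ha.1, fun v hv => ?_⟩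
    have he : (-a) * v + (-a) * v = -(a * v + a * v) := by ring
    rw [he]
    exact C.neg_mem (ha.2 v hv)

variable {C}

lemma amb_cancel (u v : Amb α β) :
    u + (u + v + (u * v + u * v)) +
      (u * (u + v + (u * v + u * v)) + u * (u + v + (u * v + u * v))) = v := by
  have h2 : ∀ a b : ZMod 2,
      a + (a + b + (a * b + a * b)) +
        (a * (a + b + (a * b + a * b)) + a * (a + b + (a * b + a * b))) = b := by decide
  have h4 : ∀ a b : ZMod 4,
      a + (a + b + (a * b + a * b)) +
        (a * (a + b + (a * b + a * b)) + a * (a + b + (a * b + a * b))) = b := by decide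
  exact amb_ext (fun i => h2 (u.1 i) (v.1 i)) (fun i => h4 (u.2 i) (v.2 i))

lemma mem_kernelK_iff {x : Bin α β} :
    x ∈ kernelK (Phi '' (C : Set (Amb α β))) ↔ x ∈ Phi '' Kset C := by
  constructor
  · intro h
    have hx : x ∈ Phi '' (C : Set (Amb α β)) := by
      have : x + Phi 0 ∈ (fun y => x + y) '' (Phi '' (C : Set (Amb α β))) :=
        ⟨Phi 0, ⟨0, C.zero_mem, rfl⟩, rfl⟩
      rw [h] at this
      simpa [Phi_zero] using this
    obtain ⟨u, hu, rfl⟩ := hx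
    refine ⟨u, ⟨hu, fun v hv => ?_⟩, rfl⟩
    have hmem : Phi u + Phi v ∈ Phi '' (C : Set (Amb α β)) := by
      rw [← h]
      exact ⟨Phi v, ⟨v, hv, rfl⟩, rfl⟩
    rw [Phi_add] at hmem
    obtain ⟨w, hw, hweq⟩ := hmem
    have hwe : w = u + v + (u * v + u * v) := Phi_injective hweq
    have : u * v + u * v = w - u - v := by rw [hwe]; ring
    rw [this]
    exact C.sub_mem (C.sub_mem hw hu) hv
  · rintro ⟨u, ⟨hu, hK⟩, rfl⟩
    apply Set.Subset.antisymm
    · rintro _ ⟨_, ⟨v, hv, rfl⟩, rfl⟩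
      dsimp only
      rw [Phi_add]
      exact ⟨_, C.add_mem (C.add_mem hu hv) (hK v hv), rfl⟩
    · rintro _ ⟨v, hv, rfl⟩
      refine ⟨Phi (u + v + (u * v + u * v)),
        ⟨_, C.add_mem (C.add_mem hu hv) (hK v hv), rfl⟩, ?_⟩
      dsimp only
      rw [Phi_add]
      exact congrArg Phi (amb_cancel u v)

lemma kernelK_eq : kernelK (Phi '' (C : Set (Amb α β))) = Phi '' Kset C :=
  Set.ext fun _ => mem_kernelK_iff

variable (C)

def KBin : Submodule (ZMod 2) (Bin α β) where
  carrier := kernelK (Phi '' (C : Set (Amb α β)))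
  zero_mem' := by
    show (fun y => (0 : Bin α β) + y) '' _ = _
    simp
  add_mem' := by
    intro x y hx hy
    show (fun z => (x + y) + z) '' _ = _
    have hc : (fun z => (x + y) + z) =
        (fun z => x + z) ∘ (fun z : Bin α β => y + z) := by
      funext z; simp [add_assoc]
    rw [hc, Set.image_comp]
    rw [show ((fun z : Bin α β => y + z) '' (Phi '' (C : Set (Amb α β)))) = _ from hy]
    exact hx
  smul_mem' := by
    intro c x hx
    have hc : c = 0 ∨ c = 1 := by revert c; decide
    rcases hc with rfl | rfl
    · rw [zero_smul]
      show (fun y => (0 : Bin α β) + y) '' _ = _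
      simp
    · rw [one_smul]; exact hx

lemma KBin_coe : (KBin C : Set (Bin α β)) = kernelK (Phi '' (C : Set (Amb α β))) := rfl

lemma kerDim_eq : kerDim (Phi '' (C : Set (Amb α β))) = Module.finrank (ZMod 2) (KBin C) := by
  unfold kerDim
  rw [← KBin_coe, Submodule.span_eq]

end Code

end ZHelp
namespace ZHelp

variable {α β : ℕ} (C : AddSubgroup (Amb α β))

lemma card_KBin : Nat.card (KBin C) = 2 ^ kerDim (Phi '' (C : Set (Amb α β))) := by
  letI : Fintype (KBin C) := Fintype.ofFinite _
  rw [kerDim_eq, Nat.card_eq_fintype_card]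
  have h := Module.card_eq_pow_finrank (K := ZMod 2) (V := KBin C)
  rwa [ZMod.card] at h

lemma card_Kset : Nat.card (Kset C) = 2 ^ kerDim (Phi '' (C : Set (Amb α β))) := by
  have himg : ((KBin C : Set (Bin α β))) = Phi '' Kset C := by rw [KBin_coe, kernelK_eq]
  have h1 : Nat.card (KBin C) = Nat.card (Kset C) := by
    calc Nat.card (KBin C) = (KBin C : Set (Bin α β)).ncard := Nat.card_coe_set_eq _
      _ = (Phi '' Kset C).ncard := by rw [himg]
      _ = (Kset C).ncard := Set.ncard_image_of_injective _ Phi_injective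
      _ = Nat.card (Kset C) := (Nat.card_coe_set_eq _).symm
  rw [← h1, card_KBin]

lemma card_pairs (m : ℕ) :
    2 * (Finset.univ.filter (fun p : Fin m × Fin m => p.1 < p.2)).card = m * m - m := by
  classical
  have hswap : (Finset.univ.filter (fun p : Fin m × Fin m => p.1 < p.2)).card
      = (Finset.univ.filter (fun p : Fin m × Fin m => p.2 < p.1)).card := by
    apply Finset.card_bij (fun p _ => Prod.swap p)
    · intro p hp
      simp only [Finset.mem_filter, Finset.mem_univ, true_and] at hp ⊢
      exact hp
    · intro p _ q _ hpq
      exact Prod.swap_injective hpq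
    · intro p hp
      simp only [Finset.mem_filter, Finset.mem_univ, true_and] at hp
      exact ⟨p.swap, by simpa using hp, by simp⟩
  have hdisj : Disjoint (Finset.univ.filter (fun p : Fin m × Fin m => p.1 < p.2))
      (Finset.univ.filter (fun p : Fin m × Fin m => p.2 < p.1)) := by
    rw [Finset.disjoint_left]
    intro p hp hq
    simp only [Finset.mem_filter] at hp hq
    exact absurd (hp.2.trans hq.2) (lt_irrefl _)
  have hunion : (Finset.univ.filter (fun p : Fin m × Fin m => p.1 < p.2)) ∪
      (Finset.univ.filter (fun p : Fin m × Fin m => p.2 < p.1))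
      = (Finset.univ : Finset (Fin m)).offDiag := by
    ext p
    simp only [Finset.mem_union, Finset.mem_filter, Finset.mem_univ, true_and,
      Finset.mem_offDiag]
    exact lt_or_lt_iff_ne
  have hcu := Finset.card_union_of_disjoint hdisj
  rw [hunion, Finset.offDiag_card, Finset.card_univ, Fintype.card_fin] at hcu
  omega

end ZHelp

open ZHelp in
/-- if `rank(C) = γ+2δ+r̄` and `ker(C) = γ+2δ−k̄` with `k̄ ≥ 2`, then
`1 ≤ r̄ ≤ k̄(k̄−1)/2`. -/
theorem rank_bound_of_kernel (α β γ δ κ rb kb : ℕ) (C : AddSubgroup (Amb α β))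
    (h : IsTypeOf α β γ δ κ C)
    (hrank : rankOf (Phi '' (C : Set (Amb α β))) = γ + 2 * δ + rb)
    (hker : kerDim (Phi '' (C : Set (Amb α β))) + kb = γ + 2 * δ)
    (hk : 2 ≤ kb) :
    1 ≤ rb ∧ rb ≤ kb * (kb - 1) / 2 := by
  classical
  obtain ⟨hcard, -, -⟩ := h
  have hPhiC : (Phi '' (C : Set (Amb α β))).ncard = 2 ^ (γ + 2 * δ) := by
    rw [Set.ncard_image_of_injective _ Phi_injective, ← Nat.card_coe_set_eq]
    exact hcard
  -- Part 1 : 1 ≤ rb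
  have h1 : 1 ≤ rb := by
    by_contra hrb
    have hrb0 : rb = 0 := by omega
    set V := Submodule.span (ZMod 2) (Phi '' (C : Set (Amb α β))) with hV
    have hfr : Module.finrank (ZMod 2) V = γ + 2 * δ := by
      have := hrank
      unfold rankOf at this
      rw [← hV] at this
      omega
    letI : Fintype V := Fintype.ofFinite _
    have hcV : Nat.card V = 2 ^ (γ + 2 * δ) := by
      rw [Nat.card_eq_fintype_card]
      have hc := Module.card_eq_pow_finrank (K := ZMod 2) (V := V)
      rwa [ZMod.card, hfr] at hc
    have hsub : Phi '' (C : Set (Amb α β)) ⊆ (V : Set (Bin α β)) := Submodule.subset_span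
    have heq : Phi '' (C : Set (Amb α β)) = (V : Set (Bin α β)) := by
      apply Set.eq_of_subset_of_ncard_le hsub
      rw [hPhiC, ← Nat.card_coe_set_eq]
      exact le_of_eq hcV
    have hker_sub : Phi '' (C : Set (Amb α β)) ⊆ kernelK (Phi '' (C : Set (Amb α β))) := by
      intro x hx
      show (fun y => x + y) '' (Phi '' (C : Set (Amb α β))) = Phi '' (C : Set (Amb α β))
      have hxV : x ∈ V := hsub hx
      rw [heq]
      apply Set.Subset.antisymm
      · rintro _ ⟨v, hv, rfl⟩
        exact V.add_mem hxV hv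
      · intro v hv
        exact ⟨v - x, V.sub_mem hv hxV, by simp⟩
    have hle : V ≤ Submodule.span (ZMod 2) (kernelK (Phi '' (C : Set (Amb α β)))) := by
      rw [hV]
      exact Submodule.span_mono hker_sub
    have hge : γ + 2 * δ ≤ kerDim (Phi '' (C : Set (Amb α β))) := by
      unfold kerDim
      rw [← hfr]
      exact Submodule.finrank_mono hle
    omega
  refine ⟨h1, ?_⟩
  -- Part 2 : rb ≤ kb (kb - 1) / 2
  set KC := (Ksub C).addSubgroupOf C with hKCdef
  letI : Module (ZMod 2) (↥C ⧸ KC) := QuotientAddGroup.zmodModule (n := 2) (by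
    intro x
    rw [two_nsmul, hKCdef, AddSubgroup.mem_addSubgroupOf]
    exact double_mem_Kset x.2)
  have hQcard : Nat.card (↥C ⧸ KC) = 2 ^ kb := by
    have hmul := AddSubgroup.card_eq_card_quotient_mul_card_addSubgroup KC
    have hKle : Ksub C ≤ C := fun v hv => hv.1
    have hKCc : Nat.card KC = 2 ^ kerDim (Phi '' (C : Set (Amb α β))) := by
      have he : Nat.card KC = Nat.card (Ksub C) :=
        Nat.card_congr (AddSubgroup.addSubgroupOfEquivOfLe hKle).toEquiv
      rw [he]
      exact card_Kset C
    rw [hcard, hKCc] at hmul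
    have h2pos : (0 : ℕ) < 2 ^ kerDim (Phi '' (C : Set (Amb α β))) := pow_pos (by norm_num) _
    have hsplit : (2:ℕ) ^ (γ + 2 * δ)
        = 2 ^ kb * 2 ^ kerDim (Phi '' (C : Set (Amb α β))) := by
      rw [← pow_add]
      congr 1
      omega
    rw [hsplit] at hmul
    exact Nat.eq_of_mul_eq_mul_right h2pos hmul.symm
  letI : Fintype (↥C ⧸ KC) := Fintype.ofFinite _
  set m := Module.finrank (ZMod 2) (↥C ⧸ KC) with hm
  have hmkb : m = kb := by
    have hc := Module.card_eq_pow_finrank (K := ZMod 2) (V := ↥C ⧸ KC)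
    rw [ZMod.card] at hc
    have h2 : (2:ℕ) ^ kb = 2 ^ m := by rw [← hQcard, Nat.card_eq_fintype_card, hc]
    exact (Nat.pow_right_injective (le_refl 2) h2).symm
  let b := Module.finBasis (ZMod 2) (↥C ⧸ KC)
  choose u hu using fun i : Fin m => QuotientAddGroup.mk'_surjective KC (b i)
  -- decomposition of an arbitrary codeword
  have decomp : ∀ w : ↥C, ∃ S : Finset (Fin m),
      ((w : Amb α β) - ∑ i ∈ S, (u i : Amb α β)) ∈ Kset C := by
    intro w
    set q := QuotientAddGroup.mk' KC w with hq
    set S := Finset.univ.filter (fun i => b.repr q i ≠ 0) with hS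
    have hone : ∀ i ∈ S, b.repr q i = 1 := by
      intro i hi
      have hne : b.repr q i ≠ 0 := (Finset.mem_filter.mp hi).2
      revert hne
      generalize b.repr q i = c
      revert c
      decide
    have hsum : ∑ i ∈ S, b i = q := by
      have hA : ∑ i ∈ S, b i = ∑ i ∈ S, b.repr q i • b i :=
        Finset.sum_congr rfl (fun i hi => by rw [hone i hi, one_smul])
      have hB : ∑ i ∈ S, b.repr q i • b i = ∑ i ∈ Finset.univ, b.repr q i • b i := by
        apply Finset.sum_subset (Finset.filter_subset _ _)
        intro i _ hi
        have h0 : b.repr q i = 0 := by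
          by_contra hne
          exact hi (Finset.mem_filter.mpr ⟨Finset.mem_univ _, hne⟩)
        rw [h0]; exact zero_smul (ZMod 2) (b i)
      rw [hA, hB, b.sum_repr]
    have hz : QuotientAddGroup.mk' KC (w - ∑ i ∈ S, u i) = 0 := by
      rw [map_sub, map_sum]
      simp only [hu]
      rw [hsum, ← hq, sub_self]
    have hmem : (w - ∑ i ∈ S, u i) ∈ KC := by
      rw [← QuotientAddGroup.eq_zero_iff (N := KC)]
      rw [← QuotientAddGroup.mk'_apply]
      exact hz
    refine ⟨S, ?_⟩
    have hmem' : ((w - ∑ i ∈ S, u i : ↥C) : Amb α β) ∈ Kset C := hmem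
    have hco : ((w - ∑ i ∈ S, u i : ↥C) : Amb α β)
        = (w : Amb α β) - ∑ i ∈ S, (u i : Amb α β) := by
      push_cast
      rfl
    exact hco ▸ hmem'
  -- the three generating pieces
  set g1 : Finset (Bin α β) := Finset.univ.image (fun i : Fin m => Phi (u i : Amb α β))
    with hg1
  set P : Finset (Fin m × Fin m) := Finset.univ.filter (fun p => p.1 < p.2) with hP
  set g2 : Finset (Bin α β) :=
    P.image (fun p => Phi ((u p.1 : Amb α β) * (u p.2 : Amb α β)
      + (u p.1 : Amb α β) * (u p.2 : Amb α β))) with hg2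
  set T : Submodule (ZMod 2) (Bin α β) :=
    KBin C ⊔ Submodule.span (ZMod 2) (g1 : Set (Bin α β))
      ⊔ Submodule.span (ZMod 2) (g2 : Set (Bin α β)) with hT
  have hKBinT : KBin C ≤ T := le_sup_of_le_left le_sup_left
  have hle1 : Submodule.span (ZMod 2) (g1 : Set (Bin α β)) ≤ T :=
    le_sup_of_le_left le_sup_right
  have hle2 : Submodule.span (ZMod 2) (g2 : Set (Bin α β)) ≤ T := le_sup_right
  have hg1T : ∀ i : Fin m, Phi (u i : Amb α β) ∈ T := by
    intro i
    exact hle1 (Submodule.subset_span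
      (Finset.mem_coe.mpr (Finset.mem_image.mpr ⟨i, Finset.mem_univ _, rfl⟩)))
  have hg2T : ∀ i j : Fin m, i ≠ j →
      Phi ((u i : Amb α β) * (u j : Amb α β)
        + (u i : Amb α β) * (u j : Amb α β)) ∈ T := by
    intro i j hij
    rcases lt_or_gt_of_ne hij with hlt | hgt
    · apply hle2
      apply Submodule.subset_span
      refine Finset.mem_coe.mpr (Finset.mem_image.mpr ⟨(i, j), ?_, rfl⟩)
      simp [hP, hlt]
    · have hcomm : (u i : Amb α β) * (u j : Amb α β) = (u j : Amb α β) * (u i : Amb α β) :=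
        mul_comm _ _
      rw [hcomm]
      apply hle2
      apply Submodule.subset_span
      refine Finset.mem_coe.mpr (Finset.mem_image.mpr ⟨(j, i), ?_, rfl⟩)
      simp [hP, hgt]
  have hPhiKset : ∀ k ∈ Kset C, Phi k ∈ T := by
    intro k hk
    apply hKBinT
    show Phi k ∈ kernelK (Phi '' (C : Set (Amb α β)))
    exact mem_kernelK_iff.mpr ⟨k, hk, rfl⟩
  -- main induction
  have key : ∀ (S : Finset (Fin m)), ∀ k ∈ Kset C,
      Phi (k + ∑ i ∈ S, (u i : Amb α β)) ∈ T := by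
    intro S
    induction S using Finset.cons_induction with
    | empty =>
      intro k hk
      simpa using hPhiKset k hk
    | cons j s hj ih =>
      intro k hk
      rw [Finset.sum_cons]
      have harr : k + ((u j : Amb α β) + ∑ i ∈ s, (u i : Amb α β))
          = (u j : Amb α β) + (k + ∑ i ∈ s, (u i : Amb α β)) := by ring
      rw [harr, Phi_add']
      refine T.add_mem (T.add_mem (hg1T j) (ih k hk)) ?_
      have hsplit : (u j : Amb α β) * (k + ∑ i ∈ s, (u i : Amb α β))
            + (u j : Amb α β) * (k + ∑ i ∈ s, (u i : Amb α β))
          = ((u j : Amb α β) * k + (u j : Amb α β) * k)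
            + (((u j : Amb α β) * ∑ i ∈ s, (u i : Amb α β))
              + ((u j : Amb α β) * ∑ i ∈ s, (u i : Amb α β))) := by ring
      rw [hsplit, Phi_double_add]
      refine T.add_mem ?_ ?_
      · -- Phi (u j * k + u j * k) ∈ KBin ≤ T
        apply hKBinT
        show _ ∈ kernelK (Phi '' (C : Set (Amb α β)))
        apply mem_kernelK_iff.mpr
        refine ⟨(u j : Amb α β) * k + (u j : Amb α β) * k, ?_, rfl⟩
        apply mem_Kset_of_double
        have := hk.2 (u j : Amb α β) (u j).2
        rwa [mul_comm k _] at this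
      · -- cross terms
        have hms : (u j : Amb α β) * ∑ i ∈ s, (u i : Amb α β)
            = ∑ i ∈ s, (u j : Amb α β) * (u i : Amb α β) := Finset.mul_sum _ _ _
        rw [hms, ← Finset.sum_add_distrib, Phi_sum_doubles]
        apply T.sum_mem
        intro i hi
        exact hg2T j i (fun hji => hj (hji ▸ hi))
  -- the code is inside T
  have hincl : Phi '' (C : Set (Amb α β)) ⊆ (T : Set (Bin α β)) := by
    rintro _ ⟨w, hw, rfl⟩
    obtain ⟨S, hS⟩ := decomp ⟨w, hw⟩
    have hwe : w = ((⟨w, hw⟩ : ↥C) : Amb α β) - (∑ i ∈ S, (u i : Amb α β))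
        + ∑ i ∈ S, (u i : Amb α β) := by ring
    rw [hwe]
    exact key S _ hS
  -- rank bound
  have hspan_le : Submodule.span (ZMod 2) (Phi '' (C : Set (Amb α β))) ≤ T :=
    Submodule.span_le.mpr hincl
  have hrk_le : rankOf (Phi '' (C : Set (Amb α β))) ≤ Module.finrank (ZMod 2) T := by
    unfold rankOf
    exact Submodule.finrank_mono hspan_le
  have hT_le : Module.finrank (ZMod 2) T
      ≤ Module.finrank (ZMod 2) (KBin C) + g1.card + g2.card := by
    have e1 : Module.finrank (ZMod 2) T
        ≤ Module.finrank (ZMod 2)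
            ↥(KBin C ⊔ Submodule.span (ZMod 2) (g1 : Set (Bin α β)))
          + Module.finrank (ZMod 2) (Submodule.span (ZMod 2) (g2 : Set (Bin α β))) := by
      rw [hT]
      exact Submodule.finrank_add_le_finrank_add_finrank _ _
    have e2 : Module.finrank (ZMod 2)
          ↥(KBin C ⊔ Submodule.span (ZMod 2) (g1 : Set (Bin α β)))
        ≤ Module.finrank (ZMod 2) (KBin C)
          + Module.finrank (ZMod 2) (Submodule.span (ZMod 2) (g1 : Set (Bin α β))) :=
      Submodule.finrank_add_le_finrank_add_finrank _ _
    have e3 : Module.finrank (ZMod 2) (Submodule.span (ZMod 2) (g1 : Set (Bin α β)))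
        ≤ g1.card := finrank_span_finset_le_card g1
    have e4 : Module.finrank (ZMod 2) (Submodule.span (ZMod 2) (g2 : Set (Bin α β)))
        ≤ g2.card := finrank_span_finset_le_card g2
    omega
  have hg1card : g1.card ≤ m := by
    calc g1.card ≤ (Finset.univ : Finset (Fin m)).card := Finset.card_image_le
      _ = m := by simp
  have hg2card : g2.card ≤ P.card := Finset.card_image_le
  have hpair := card_pairs m
  rw [← hP] at hpair
  have hkd := kerDim_eq C
  -- put everything together
  have hfin : γ + 2 * δ + rb ≤ kerDim (Phi '' (C : Set (Amb α β))) + m + P.card := by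
    rw [← hrank, hkd]
    omega
  obtain ⟨cP, hcP⟩ : ∃ c, P.card = c := ⟨_, rfl⟩
  rw [hcP] at hfin hpair
  rw [hmkb] at hfin hpair
  have hmm : kb * (kb - 1) = kb * kb - kb := by rw [Nat.mul_sub, Nat.mul_one]
  obtain ⟨sq, hsq⟩ : ∃ s, kb * kb = s := ⟨_, rfl⟩
  rw [hsq] at hpair
  rw [hmm, hsq]
  omega
end
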